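/- For every finite simple graph without isolated vertices, all p,q ≥ 1, and every k ∈ {1,…,n}: inf { sup_{x∈S} F_p(Φ_{q/p}(x)) : S ⊂ ℝ^n∖{0} symmetric compact with γ⁻(S) ≥ k } = λ_k⁻(Δ_p), and likewise inf { sup_{x∈S} F_p(Φ_{q/p}(x)) : S ⊂ ℝ^n∖{0} symmetric compact with γ⁺(S) ≥ k } = λ_k⁺(Δ_p). That is, the min-max critical values of F_p ∘ Φ_{q/p} coincide with those of F_p. -/

import Mathlib

open scoped BigOperators Pointwise NNReal Classical

noncomputable section

/-! ### The graph `p`-Laplacian: Rayleigh quotients, genus, variational eigenvalues -/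

/-- `Σ_{{i,j}∈E} |x_i − x_j|^p` (each unordered edge counted once). -/
def TVp {n : ℕ} (G : SimpleGraph (Fin n)) [DecidableRel G.Adj] (p : ℝ) (x : Fin n → ℝ) : ℝ :=
  (∑ i : Fin n, ∑ j : Fin n, if G.Adj i j then |x i - x j| ^ p else 0) / 2

/-- `Σ_{i∈V} deg(i)·|x_i|^p`. -/
def Np {n : ℕ} (G : SimpleGraph (Fin n)) [DecidableRel G.Adj] (p : ℝ) (x : Fin n → ℝ) : ℝ :=
  ∑ i : Fin n, (G.degree i : ℝ) * |x i| ^ p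

/-- The `p`-Rayleigh quotient `F_p`. -/
def Fp {n : ℕ} (G : SimpleGraph (Fin n)) [DecidableRel G.Adj] (p : ℝ) (x : Fin n → ℝ) : ℝ :=
  TVp G p x / Np G p x

/-- A set is (centrally) symmetric if `S = -S`. -/
def SymmSet {n : ℕ} (S : Set (Fin n → ℝ)) : Prop := ∀ x ∈ S, -x ∈ S

/-- There is a continuous odd map from `S` to the unit sphere `𝕊^{k-1} ⊂ ℝ^k`. -/
def HasOddMapToSphere {n : ℕ} (S : Set (Fin n → ℝ)) (k : ℕ) : Prop :=
  ∃ φ : (Fin n → ℝ) → EuclideanSpace ℝ (Fin k),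
    ContinuousOn φ S ∧ (∀ x ∈ S, ‖φ x‖ = 1) ∧ ∀ x ∈ S, φ (-x) = -φ x

/-- There is a continuous odd map from the unit sphere `𝕊^{k-1} ⊂ ℝ^k` to `S`. -/
def HasOddMapFromSphere {n : ℕ} (S : Set (Fin n → ℝ)) (k : ℕ) : Prop :=
  ∃ φ : EuclideanSpace ℝ (Fin k) → (Fin n → ℝ),
    ContinuousOn φ (Metric.sphere (0 : EuclideanSpace ℝ (Fin k)) 1) ∧
    (∀ x ∈ Metric.sphere (0 : EuclideanSpace ℝ (Fin k)) 1, φ x ∈ S) ∧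
    ∀ x ∈ Metric.sphere (0 : EuclideanSpace ℝ (Fin k)) 1, φ (-x) = -φ x

/-- The Krasnoselskii genus `γ⁻`. -/
def genNeg {n : ℕ} (S : Set (Fin n → ℝ)) : ℕ :=
  if S.Nonempty ∧ SymmSet S then sInf {k | 1 ≤ k ∧ HasOddMapToSphere S k} else 0

/-- The index `γ⁺`. -/
def genPos {n : ℕ} (S : Set (Fin n → ℝ)) : ℕ :=
  if S.Nonempty ∧ SymmSet S then sSup {k | 1 ≤ k ∧ HasOddMapFromSphere S k} else 0

/-- Admissible sets for the min-max principle: symmetric compact subsets of `ℝ^n∖{0}`. -/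
def Admissible {n : ℕ} (S : Set (Fin n → ℝ)) : Prop :=
  IsCompact S ∧ (0 : Fin n → ℝ) ∉ S ∧ SymmSet S

/-- The variational eigenvalues `λ_k⁻(Δ_p)`. -/
def lamNeg {n : ℕ} (G : SimpleGraph (Fin n)) [DecidableRel G.Adj] (p : ℝ) (k : ℕ) : ℝ :=
  sInf {r | ∃ S : Set (Fin n → ℝ), Admissible S ∧ k ≤ genNeg S ∧ r = sSup (Fp G p '' S)}

/-- The min-max eigenvalues `λ_k⁺(Δ_p)`. -/
def lamPos {n : ℕ} (G : SimpleGraph (Fin n)) [DecidableRel G.Adj] (p : ℝ) (k : ℕ) : ℝ :=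
  sInf {r | ∃ S : Set (Fin n → ℝ), Admissible S ∧ k ≤ genPos S ∧ r = sSup (Fp G p '' S)}

/-! ### Eigenpairs of `Δ_p` -/

/-- The set-valued sign: `Sgn(t) = {1}` if `t>0`, `[-1,1]` if `t=0`, `{-1}` if `t<0`. -/
def Sgn (t : ℝ) : Set ℝ := if 0 < t then {1} else if t < 0 then {-1} else Set.Icc (-1) 1

/-- Eigenpairs of the graph `p`-Laplacian for `p > 1`.  (Note that for `t = 0` the
expression `|t|^(p-2) * t` equals `0`, matching the convention `|t|^{p-2}t = 0`.) -/
def IsEigenpairP {n : ℕ} (G : SimpleGraph (Fin n)) [DecidableRel G.Adj] (p lam : ℝ)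
    (x : Fin n → ℝ) : Prop :=
  x ≠ 0 ∧ ∀ i, (∑ j : Fin n, if G.Adj i j then |x i - x j| ^ (p - 2) * (x i - x j) else 0) =
    lam * (G.degree i : ℝ) * (|x i| ^ (p - 2) * x i)

/-- Eigenpairs of the graph `1`-Laplacian. -/
def IsEigenpair1 {n : ℕ} (G : SimpleGraph (Fin n)) [DecidableRel G.Adj] (lam : ℝ)
    (x : Fin n → ℝ) : Prop :=
  x ≠ 0 ∧ ∃ z : Fin n → Fin n → ℝ,
    (∀ i j, G.Adj i j → z i j ∈ Sgn (x i - x j)) ∧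
    (∀ i j, G.Adj i j → z i j = -z j i) ∧
    ∀ i, (∑ j : Fin n, if G.Adj i j then z i j else 0) ∈
      (fun s => lam * (G.degree i : ℝ) * s) '' Sgn (x i)

/-- Eigenpairs of `Δ_p` for `p ≥ 1` (with the `1`-Laplacian convention at `p = 1`). -/
def IsEigenpair {n : ℕ} (G : SimpleGraph (Fin n)) [DecidableRel G.Adj] (p lam : ℝ)
    (x : Fin n → ℝ) : Prop :=
  (p = 1 ∧ IsEigenpair1 G lam x) ∨ (1 < p ∧ IsEigenpairP G p lam x)

/-! ### Cheeger constants -/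

/-- `|∂A|`: the number of edges with exactly one endpoint in `A`. -/
def eBoundary {n : ℕ} (G : SimpleGraph (Fin n)) [DecidableRel G.Adj] (A : Finset (Fin n)) : ℕ :=
  ∑ i ∈ A, ∑ j ∈ Aᶜ, if G.Adj i j then 1 else 0

/-- `vol(A) = Σ_{i∈A} deg(i)`. -/
def volG {n : ℕ} (G : SimpleGraph (Fin n)) [DecidableRel G.Adj] (A : Finset (Fin n)) : ℕ :=
  ∑ i ∈ A, G.degree i

/-- The multi-way Cheeger constants `h_k`. -/
def cheeger {n : ℕ} (G : SimpleGraph (Fin n)) [DecidableRel G.Adj] (k : ℕ) : ℝ :=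
  sInf {r | ∃ A : Fin k → Finset (Fin n), (∀ i, (A i).Nonempty) ∧
    (∀ i j, i ≠ j → Disjoint (A i) (A j)) ∧
    r = ⨆ i, (eBoundary G (A i) : ℝ) / (volG G (A i) : ℝ)}
/-! ### The map Φ -/

/-- `Φ_c(x)_i = |x_i|^c · sign(x_i)`. -/
def Phi {n : ℕ} (c : ℝ) (x : Fin n → ℝ) : Fin n → ℝ := fun i => |x i| ^ c * Real.sign (x i)

/-! ### The simplicial complex `K_n` and the modified Cheeger constants -/

/-- The vector `1_A - 1_B`. -/
def charVec {n : ℕ} (A B : Finset (Fin n)) : Fin n → ℝ :=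
  fun i => if i ∈ A then 1 else if i ∈ B then -1 else 0

/-- The inclusion order on pairs of sets: `(A,B) ≺ (A',B')` iff `A ⊆ A'` and `B ⊆ B'`. -/
def pairLE {n : ℕ} (a b : Finset (Fin n) × Finset (Fin n)) : Prop := a.1 ⊆ b.1 ∧ a.2 ⊆ b.2

/-- The geometric realization `|K(𝒜)|`: the union over all chains of elements of `𝒜` of the
convex hulls of the corresponding vectors `1_A - 1_B`. -/
def geomComplex {n : ℕ} (𝒜 : Set (Finset (Fin n) × Finset (Fin n))) : Set (Fin n → ℝ) :=
  ⋃ (C : Set (Finset (Fin n) × Finset (Fin n))) (_ : C ⊆ 𝒜) (_ : IsChain pairLE C),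
    convexHull ℝ ((fun ab => charVec ab.1 ab.2) '' C)

/-- The modified combinatorial `k`-way Cheeger constant `ĥ_k⁻`. -/
def hHatNeg {n : ℕ} (G : SimpleGraph (Fin n)) [DecidableRel G.Adj] (k : ℕ) : ℝ :=
  sInf {r | ∃ 𝒜 : Set (Finset (Fin n) × Finset (Fin n)),
    (∀ ab ∈ 𝒜, Disjoint ab.1 ab.2 ∧ (ab.1 ∪ ab.2).Nonempty) ∧
    k ≤ genNeg (geomComplex 𝒜) ∧
    r = sSup ((fun ab : Finset (Fin n) × Finset (Fin n) =>
      ((eBoundary G ab.1 : ℝ) + (eBoundary G ab.2 : ℝ)) / (volG G (ab.1 ∪ ab.2) : ℝ)) '' 𝒜)}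

/-! ### Subpartitions into cliques and the pseudo-independence number -/

/-- `c(V_i) = 1` if `|V_i| ≤ 2` and `c(V_i) = 2` if `|V_i| ≥ 3`. -/
def cOf {n : ℕ} (A : Finset (Fin n)) : ℕ := if A.card ≤ 2 then 1 else 2

/-- A subpartition of `V` into sets each inducing a complete subgraph of `G`. -/
def IsCliqueSubpartition {n : ℕ} (G : SimpleGraph (Fin n)) (P : Finset (Finset (Fin n))) : Prop :=
  (∀ A ∈ P, A.Nonempty ∧ G.IsClique (A : Set (Fin n))) ∧
    ∀ A ∈ P, ∀ B ∈ P, A ≠ B → Disjoint A B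

/-- The members of `P` are pairwise non-adjacent: every edge of `G` meets at most one of them. -/
def PairwiseNonAdjacent {n : ℕ} (G : SimpleGraph (Fin n)) (P : Finset (Finset (Fin n))) : Prop :=
  ∀ i j, G.Adj i j → ∀ A ∈ P, ∀ B ∈ P, (i ∈ A ∨ j ∈ A) → (i ∈ B ∨ j ∈ B) → A = B

/-- The pseudo-independence number `α_*(G)`. -/
def pseudoIndepNum {n : ℕ} (G : SimpleGraph (Fin n)) : ℕ :=
  sSup {m | ∃ P : Finset (Finset (Fin n)), IsCliqueSubpartition G P ∧
    PairwiseNonAdjacent G P ∧ m = ∑ A ∈ P, cOf A}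

/-- `h_*(P)`. -/
def hStar {n : ℕ} (G : SimpleGraph (Fin n)) [DecidableRel G.Adj]
    (P : Finset (Finset (Fin n))) : ℝ :=
  sInf {r | ∃ A : Finset (Fin n), A.Nonempty ∧ (∀ v ∈ A, ∃ W ∈ P, v ∈ W) ∧
    (∀ W ∈ P, (A ∩ W).card ≤ 1) ∧ r = (eBoundary G A : ℝ) / (volG G A : ℝ)}

/-! ### The set-valued 1-Laplacian and the p-Laplacian operator -/

/-- The set `Δ_1 x`. -/
def Delta1Set {n : ℕ} (G : SimpleGraph (Fin n)) [DecidableRel G.Adj] (x : Fin n → ℝ) :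
    Set (Fin n → ℝ) :=
  {v | ∃ z : Fin n → Fin n → ℝ,
    (∀ i j, G.Adj i j → z i j ∈ Sgn (x i - x j)) ∧
    (∀ i j, G.Adj i j → z i j = -z j i) ∧
    v = fun i => ∑ j : Fin n, if G.Adj i j then z i j else 0}

/-- The `p`-Laplacian `Δ_p x` for `p > 1`. -/
def DeltaP {n : ℕ} (G : SimpleGraph (Fin n)) [DecidableRel G.Adj] (p : ℝ) (x : Fin n → ℝ) :
    Fin n → ℝ :=
  fun i => ∑ j : Fin n, if G.Adj i j then |x i - x j| ^ (p - 2) * (x i - x j) else 0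

/-- The normalized eigenspace `Ŝ_λ(Δ_p)`. -/
def hatS {n : ℕ} (G : SimpleGraph (Fin n)) [DecidableRel G.Adj] (p lam : ℝ) :
    Set (Fin n → ℝ) :=
  {x | ‖x‖ = 1 ∧ IsEigenpair G p lam x}

/-! ### Auxiliary lemmas: `Φ_c` is an odd homeomorphism preserving admissibility and genus -/

lemma sign_abs_le' (t : ℝ) : |Real.sign t| ≤ 1 := by
  rcases lt_trichotomy t 0 with h|h|h
  · simp [Real.sign_of_neg h]
  · simp [h, Real.sign_zero]
  · simp [Real.sign_of_pos h]

lemma fphi_cont {c : ℝ} (hc : 0 < c) :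
    Continuous (fun t : ℝ => |t| ^ c * Real.sign t) := by
  have habs : Continuous (fun t : ℝ => |t| ^ c) :=
    continuous_abs.rpow_const (fun t => Or.inr hc.le)
  rw [continuous_iff_continuousAt]
  intro a
  rcases lt_trichotomy a 0 with h|h|h
  · apply ContinuousAt.congr habs.neg.continuousAt
    filter_upwards [Iio_mem_nhds h] with t ht
    rw [Real.sign_of_neg ht]; simp only [Pi.neg_apply]; ring
  · subst h
    have h0 : |(0:ℝ)| ^ c * Real.sign 0 = 0 := by simp [Real.sign_zero]
    unfold ContinuousAt
    simp only [show ((fun t : ℝ => |t| ^ c * Real.sign t) 0) = 0 from h0]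
    apply squeeze_zero_norm (a := fun t : ℝ => |t| ^ c)
    · intro t
      rw [Real.norm_eq_abs, abs_mul, abs_of_nonneg (Real.rpow_nonneg (abs_nonneg t) c)]
      calc |t| ^ c * |Real.sign t| ≤ |t| ^ c * 1 :=
            mul_le_mul_of_nonneg_left (sign_abs_le' t) (Real.rpow_nonneg (abs_nonneg t) c)
        _ = |t| ^ c := mul_one _
    · have := habs.continuousAt (x := 0)
      simpa [ContinuousAt, Real.zero_rpow hc.ne'] using this
  · apply ContinuousAt.congr habs.continuousAt
    filter_upwards [Ioi_mem_nhds h] with t ht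
    rw [Real.sign_of_pos ht, mul_one]

lemma Phi_continuous {n : ℕ} {c : ℝ} (hc : 0 < c) : Continuous (Phi (n := n) c) := by
  unfold Phi
  exact continuous_pi fun i => (fphi_cont hc).comp (continuous_apply i)

lemma Phi_neg {n : ℕ} (c : ℝ) (x : Fin n → ℝ) : Phi c (-x) = -Phi c x := by
  funext i
  simp only [Phi, Pi.neg_apply, abs_neg, Real.sign_neg]
  ring

lemma Phi_leftInv {n : ℕ} {c : ℝ} (hc : 0 < c) (x : Fin n → ℝ) : Phi c⁻¹ (Phi c x) = x := by
  funext i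
  simp only [Phi]
  rcases lt_trichotomy (x i) 0 with h|h|h
  · have hp : (0:ℝ) < |x i| ^ c := Real.rpow_pos_of_pos (abs_pos.mpr h.ne) c
    rw [Real.sign_of_neg h, show |x i| ^ c * (-1:ℝ) = -(|x i| ^ c) by ring,
      Real.sign_of_neg (neg_neg_iff_pos.mpr hp), abs_neg, abs_of_pos hp,
      ← Real.rpow_mul (abs_nonneg _), mul_inv_cancel₀ hc.ne', Real.rpow_one,
      abs_of_neg h]
    ring
  · simp [h, Real.sign_zero, Real.zero_rpow (inv_ne_zero hc.ne')]
  · have hp : (0:ℝ) < |x i| ^ c := Real.rpow_pos_of_pos (abs_pos.mpr h.ne') c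
    rw [Real.sign_of_pos h, mul_one, Real.sign_of_pos hp, mul_one,
      abs_of_pos hp, ← Real.rpow_mul (abs_nonneg _), mul_inv_cancel₀ hc.ne', Real.rpow_one,
      abs_of_pos h]

lemma Phi_rightInv {n : ℕ} {c : ℝ} (hc : 0 < c) (x : Fin n → ℝ) : Phi c (Phi c⁻¹ x) = x := by
  have := Phi_leftInv (n := n) (c := c⁻¹) (inv_pos.mpr hc) x
  rwa [inv_inv] at this

lemma Phi_zero {n : ℕ} (c : ℝ) : Phi (n := n) c 0 = 0 := by
  funext i; simp [Phi, Real.sign_zero]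

lemma symmSet_image {n : ℕ} {c : ℝ} {S : Set (Fin n → ℝ)} (hsym : SymmSet S) :
    SymmSet (Phi c '' S) := by
  rintro y ⟨x, hx, rfl⟩
  exact ⟨-x, hsym x hx, Phi_neg c x⟩

lemma admissible_image {n : ℕ} {c : ℝ} (hc : 0 < c) {S : Set (Fin n → ℝ)}
    (hS : Admissible S) : Admissible (Phi c '' S) := by
  obtain ⟨hcomp, h0, hsym⟩ := hS
  refine ⟨hcomp.image (Phi_continuous hc), ?_, symmSet_image hsym⟩
  rintro ⟨x, hx, hx0⟩
  apply h0
  have hx0' : x = 0 := by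
    have := congrArg (Phi c⁻¹) hx0
    rwa [Phi_leftInv hc, Phi_zero] at this
  rwa [hx0'] at hx

lemma hasOddMapToSphere_image_iff {n : ℕ} {c : ℝ} (hc : 0 < c) (S : Set (Fin n → ℝ)) (m : ℕ) :
    HasOddMapToSphere (Phi c '' S) m ↔ HasOddMapToSphere S m := by
  constructor
  · rintro ⟨φ, hcont, hnorm, hodd⟩
    refine ⟨φ ∘ Phi c, hcont.comp (Phi_continuous hc).continuousOn (Set.mapsTo_image _ _),
      fun x hx => hnorm _ (Set.mem_image_of_mem _ hx), fun x hx => ?_⟩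
    simp only [Function.comp_apply, Phi_neg]
    exact hodd _ (Set.mem_image_of_mem _ hx)
  · rintro ⟨φ, hcont, hnorm, hodd⟩
    have hmaps : Set.MapsTo (Phi c⁻¹) (Phi c '' S) S := by
      rintro y ⟨x, hx, rfl⟩
      rw [Phi_leftInv hc]; exact hx
    refine ⟨φ ∘ Phi c⁻¹,
      hcont.comp (Phi_continuous (inv_pos.mpr hc)).continuousOn hmaps, ?_, ?_⟩
    · rintro y ⟨x, hx, rfl⟩
      rw [Function.comp_apply, Phi_leftInv hc]; exact hnorm _ hx
    · rintro y ⟨x, hx, rfl⟩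
      simp only [Function.comp_apply, ← Phi_neg, Phi_leftInv hc]
      exact hodd _ hx

lemma hasOddMapFromSphere_image_iff {n : ℕ} {c : ℝ} (hc : 0 < c) (S : Set (Fin n → ℝ)) (m : ℕ) :
    HasOddMapFromSphere (Phi c '' S) m ↔ HasOddMapFromSphere S m := by
  constructor
  · rintro ⟨φ, hcont, hmem, hodd⟩
    refine ⟨Phi c⁻¹ ∘ φ,
      (Phi_continuous (inv_pos.mpr hc)).comp_continuousOn hcont, ?_, ?_⟩
    · intro x hx
      obtain ⟨y, hy, hyx⟩ := hmem x hx
      rw [Function.comp_apply, ← hyx, Phi_leftInv hc]; exact hy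
    · intro x hx
      rw [Function.comp_apply, hodd x hx, Phi_neg, Function.comp_apply]
  · rintro ⟨φ, hcont, hmem, hodd⟩
    refine ⟨Phi c ∘ φ, (Phi_continuous hc).comp_continuousOn hcont,
      fun x hx => Set.mem_image_of_mem _ (hmem x hx), fun x hx => ?_⟩
    rw [Function.comp_apply, hodd x hx, Phi_neg, Function.comp_apply]

lemma genNeg_image {n : ℕ} {c : ℝ} (hc : 0 < c) (S : Set (Fin n → ℝ))
    (hne : S.Nonempty) (hsym : SymmSet S) : genNeg (Phi c '' S) = genNeg S := by
  unfold genNeg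
  rw [if_pos ⟨hne.image _, symmSet_image hsym⟩, if_pos ⟨hne, hsym⟩]
  congr 1
  ext m
  simp [hasOddMapToSphere_image_iff hc]

lemma genPos_image {n : ℕ} {c : ℝ} (hc : 0 < c) (S : Set (Fin n → ℝ))
    (hne : S.Nonempty) (hsym : SymmSet S) : genPos (Phi c '' S) = genPos S := by
  unfold genPos
  rw [if_pos ⟨hne.image _, symmSet_image hsym⟩, if_pos ⟨hne, hsym⟩]
  congr 1
  ext m
  simp [hasOddMapFromSphere_image_iff hc]

lemma genNeg_empty_of_not_nonempty {n : ℕ} {S : Set (Fin n → ℝ)} (h : ¬ S.Nonempty) :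
    genNeg S = 0 := by
  unfold genNeg; rw [if_neg (fun hh => h hh.1)]

lemma genPos_empty_of_not_nonempty {n : ℕ} {S : Set (Fin n → ℝ)} (h : ¬ S.Nonempty) :
    genPos S = 0 := by
  unfold genPos; rw [if_neg (fun hh => h hh.1)]

lemma minmax_phi_eq {n : ℕ} (G : SimpleGraph (Fin n)) [DecidableRel G.Adj]
    (p c : ℝ) (hc : 0 < c) (k : ℕ) (hk1 : 1 ≤ k) (genF : Set (Fin n → ℝ) → ℕ)
    (hgen : ∀ {c' : ℝ}, 0 < c' → ∀ S : Set (Fin n → ℝ), S.Nonempty → SymmSet S →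
      genF (Phi c' '' S) = genF S)
    (hemp : ∀ S : Set (Fin n → ℝ), ¬ S.Nonempty → genF S = 0) :
    {r | ∃ S : Set (Fin n → ℝ), Admissible S ∧ k ≤ genF S ∧
        r = sSup ((fun x => Fp G p (Phi c x)) '' S)} =
    {r | ∃ S : Set (Fin n → ℝ), Admissible S ∧ k ≤ genF S ∧ r = sSup (Fp G p '' S)} := by
  ext r
  constructor
  · rintro ⟨S, hS, hg, rfl⟩
    have hne : S.Nonempty := by
      by_contra h
      rw [hemp S h] at hg
      omega
    refine ⟨Phi c '' S, admissible_image hc hS, ?_, ?_⟩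
    · rw [hgen hc S hne hS.2.2]; exact hg
    · rw [Set.image_image]
  · rintro ⟨S, hS, hg, rfl⟩
    have hne : S.Nonempty := by
      by_contra h
      rw [hemp S h] at hg
      omega
    refine ⟨Phi c⁻¹ '' S, admissible_image (inv_pos.mpr hc) hS, ?_, ?_⟩
    · rw [hgen (inv_pos.mpr hc) S hne hS.2.2]; exact hg
    · rw [Set.image_image]
      congr 1
      ext x
      simp only [Set.mem_image]
      constructor
      · rintro ⟨y, hy, rfl⟩
        exact ⟨y, hy, by rw [Phi_rightInv hc]⟩
      · rintro ⟨y, hy, rfl⟩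
        exact ⟨y, hy, by rw [Phi_rightInv hc]⟩

/-- **The min-max critical values of `F_p ∘ Φ_{q/p}` coincide with `λ_k^±(Δ_p)`.** -/
theorem stmt14 {n : ℕ} (G : SimpleGraph (Fin n)) [DecidableRel G.Adj]
    (hdeg : ∀ i, 0 < G.degree i) (p q : ℝ) (hp : 1 ≤ p) (hq : 1 ≤ q)
    (k : ℕ) (hk1 : 1 ≤ k) (hkn : k ≤ n) :
    sInf {r | ∃ S : Set (Fin n → ℝ), Admissible S ∧ k ≤ genNeg S ∧
        r = sSup ((fun x => Fp G p (Phi (q / p) x)) '' S)} = lamNeg G p k ∧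
    sInf {r | ∃ S : Set (Fin n → ℝ), Admissible S ∧ k ≤ genPos S ∧
        r = sSup ((fun x => Fp G p (Phi (q / p) x)) '' S)} = lamPos G p k := by
  have hc : 0 < q / p := div_pos (lt_of_lt_of_le one_pos hq) (lt_of_lt_of_le one_pos hp)
  constructor
  · rw [minmax_phi_eq G p (q / p) hc k hk1 genNeg
      (fun hc' S hne hsym => genNeg_image hc' S hne hsym)
      (fun S h => genNeg_empty_of_not_nonempty h)]
    rfl
  · rw [minmax_phi_eq G p (q / p) hc k hk1 genPos
      (fun hc' S hne hsym => genPos_image hc' S hne hsym)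
      (fun S h => genPos_empty_of_not_nonempty h)]
    rfl
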